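/- Let g : ℝ → ℝ be differentiable with g'(s) ∈ [1/2, 2] for every s ∈ ℝ. Then for every u ∈ ℝ, every r > 0 and every t > 0: ∫₀^t 1_{min(s, g(s)) ≤ u ≤ max(s, g(s))} / (r + |s − g(s)|) ds ≤ 3. -/

import Mathlib

open MeasureTheory Set

/-- If `g : ℝ → ℝ` is differentiable with `g' ∈ [1/2, 2]` everywhere,
then for every `u ∈ ℝ`, `r > 0` and `t > 0`,
`∫₀^t 1_{min(s,g(s)) ≤ u ≤ max(s,g(s))} / (r + |s - g(s)|) ds ≤ 3`. -/
theorem stmt15 (g : ℝ → ℝ) (hg : Differentiable ℝ g)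
    (hg' : ∀ s, deriv g s ∈ Set.Icc (1 / 2 : ℝ) 2)
    (u r t : ℝ) (hr : 0 < r) (ht : 0 < t) :
    ∫ s in Set.Ioc (0 : ℝ) t,
        (if min s (g s) ≤ u ∧ u ≤ max s (g s) then (r + |s - g s|)⁻¹ else 0) ≤ 3 := by
  -- growth lower bound
  have hlow : ∀ ⦃x y : ℝ⦄, x ≤ y → (1/2 : ℝ) * (y - x) ≤ g y - g x :=
    mul_sub_le_image_sub_of_le_deriv hg (fun x => (hg' x).1)
  have hmono : StrictMono g := by
    intro x y hxy
    have := hlow hxy.le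
    linarith
  -- find b with g b = u
  obtain ⟨b, -, hb⟩ : ∃ b ∈ Icc (-(2*|u - g 0|)) (2*|u - g 0|), g b = u := by
    have hM : (0:ℝ) ≤ 2*|u - g 0| := by positivity
    have h1 : g (-(2*|u - g 0|)) ≤ u := by
      have := hlow (show -(2*|u - g 0|) ≤ 0 by linarith)
      have h := neg_abs_le (u - g 0)
      linarith
    have h2 : u ≤ g (2*|u - g 0|) := by
      have := hlow (show (0:ℝ) ≤ 2*|u - g 0| by linarith)
      have h := le_abs_self (u - g 0)
      linarith
    have := intermediate_value_Icc (show -(2*|u - g 0|) ≤ 2*|u - g 0| by linarith)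
      hg.continuous.continuousOn (a := -(2*|u - g 0|)) (b := 2*|u - g 0|)
    obtain ⟨b, hbmem, hbeq⟩ := this ⟨h1, h2⟩
    exact ⟨b, hbmem, hbeq⟩
  set a' := min u b with ha'
  set b' := max u b with hb'
  set L := b' - a' with hLdef
  have hL0 : 0 ≤ L := sub_nonneg.2 min_le_max
  have hc0 : 0 < r + L/2 := by linarith
  -- the indicator condition forces s between u and b
  have hsub : ∀ s : ℝ, (min s (g s) ≤ u ∧ u ≤ max s (g s)) → s ∈ Icc a' b' := by
    intro s hs
    constructor
    · by_contra h
      push_neg at h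
      have hsu : s < u := lt_of_lt_of_le h (min_le_left _ _)
      have hsb : s < b := lt_of_lt_of_le h (min_le_right _ _)
      have : g s < u := hb ▸ hmono hsb
      have : max s (g s) < u := max_lt hsu this
      linarith [hs.2]
    · by_contra h
      push_neg at h
      have hsu : u < s := lt_of_le_of_lt (le_max_left _ _) h
      have hsb : b < s := lt_of_le_of_lt (le_max_right _ _) h
      have : u < g s := hb ▸ hmono hsb
      have : u < min s (g s) := lt_min hsu this
      linarith [hs.1]
  -- on the set, |s - g s| ≥ L / 2
  have hbig : ∀ s : ℝ, (min s (g s) ≤ u ∧ u ≤ max s (g s)) → L / 2 ≤ |s - g s| := by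
    intro s hs
    -- u is between s and g s, so |s - g s| = |s - u| + |u - g s|
    have hsplit : |s - u| + |u - g s| = |s - g s| := by
      rcases le_total s (g s) with h | h
      · have h1 : s ≤ u := by simpa [min_eq_left h] using hs.1
        have h2 : u ≤ g s := by simpa [max_eq_right h] using hs.2
        rw [abs_of_nonpos (by linarith), abs_of_nonpos (by linarith),
          abs_of_nonpos (by linarith)]
        ring
      · have h1 : g s ≤ u := by simpa [min_eq_right h] using hs.1
        have h2 : u ≤ s := by simpa [max_eq_left h] using hs.2
        rw [abs_of_nonneg (by linarith), abs_of_nonneg (by linarith),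
          abs_of_nonneg (by linarith)]
        ring
    -- |u - g s| = |g b - g s| ≥ |b - s| / 2
    have h2 : |b - s| / 2 ≤ |u - g s| := by
      rcases le_total b s with h | h
      · have := hlow h
        rw [hb] at this
        rw [abs_of_nonpos (by linarith), abs_of_nonpos (by linarith)]
        linarith
      · have := hlow h
        rw [hb] at this
        rw [abs_of_nonneg (by linarith), abs_of_nonneg (by linarith)]
        linarith
    have htri : |u - b| ≤ |s - u| + |b - s| := by
      calc |u - b| = |(u - s) + (s - b)| := by ring_nf
        _ ≤ |u - s| + |s - b| := abs_add_le _ _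
        _ = |s - u| + |b - s| := by rw [abs_sub_comm u s, abs_sub_comm s b]
    have hLub : L = |u - b| := by
      rcases le_total u b with h | h
      · rw [hLdef, ha', hb', min_eq_left h, max_eq_right h, abs_of_nonpos (by linarith)]
        ring
      · rw [hLdef, ha', hb', min_eq_right h, max_eq_left h, abs_of_nonneg (by linarith)]
    rw [hLub]
    linarith [abs_nonneg (s - u)]
  set F : ℝ → ℝ := fun s =>
    if min s (g s) ≤ u ∧ u ≤ max s (g s) then (r + |s - g s|)⁻¹ else 0 with hF
  have hFmeas : Measurable F := by
    apply Measurable.ite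
    · exact MeasurableSet.inter
        (measurableSet_le (continuous_id.min hg.continuous).measurable measurable_const)
        (measurableSet_le measurable_const (continuous_id.max hg.continuous).measurable)
    · exact ((continuous_const.add (continuous_id.sub hg.continuous).abs).measurable).inv
    · exact measurable_const
  have hFbd : ∀ s, ‖F s‖ ≤ r⁻¹ := by
    intro s
    rw [hF]
    dsimp only
    split_ifs with h
    · rw [Real.norm_eq_abs, abs_of_nonneg (by positivity)]
      exact inv_anti₀ hr (by simp [abs_nonneg, le_add_iff_nonneg_right])
    · simp [inv_nonneg.2 hr.le]
  have hFint : IntegrableOn F (Ioc (0:ℝ) t) := by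
    apply Measure.integrableOn_of_bounded measure_Ioc_lt_top.ne
      hFmeas.aestronglyMeasurable
    exact Filter.Eventually.of_forall hFbd
  -- pointwise bound by an indicator
  have hpt : ∀ s ∈ Ioc (0:ℝ) t,
      F s ≤ (Icc a' b').indicator (fun _ => (r + L/2)⁻¹) s := by
    intro s _
    rw [hF]
    dsimp only
    split_ifs with h
    · rw [indicator_of_mem (hsub s h)]
      exact inv_anti₀ hc0 (by linarith [hbig s h])
    · exact indicator_nonneg (fun _ _ => inv_nonneg.2 hc0.le) s
  have hIint : IntegrableOn ((Icc a' b').indicator (fun _ => (r + L/2)⁻¹)) (Ioc (0:ℝ) t) :=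
    (((integrable_indicator_iff measurableSet_Icc).2
      (integrableOn_const measure_Icc_lt_top.ne))).integrableOn
  calc ∫ s in Ioc (0:ℝ) t, F s
      ≤ ∫ s in Ioc (0:ℝ) t, (Icc a' b').indicator (fun _ => (r + L/2)⁻¹) s :=
        setIntegral_mono_on hFint hIint measurableSet_Ioc hpt
    _ = ∫ _ in Ioc (0:ℝ) t ∩ Icc a' b', (r + L/2)⁻¹ := by
        rw [setIntegral_indicator measurableSet_Icc]
    _ = (volume (Ioc (0:ℝ) t ∩ Icc a' b')).toReal * (r + L/2)⁻¹ := by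
        rw [setIntegral_const, smul_eq_mul, measureReal_def, mul_comm]
    _ ≤ L * (r + L/2)⁻¹ := by
        apply mul_le_mul_of_nonneg_right _ (inv_nonneg.2 hc0.le)
        have hsub' : volume (Ioc (0:ℝ) t ∩ Icc a' b') ≤ volume (Icc a' b') :=
          measure_mono inter_subset_right
        have : (volume (Ioc (0:ℝ) t ∩ Icc a' b')).toReal ≤ (volume (Icc a' b')).toReal :=
          ENNReal.toReal_mono (by simp) hsub'
        rwa [Real.volume_Icc, ENNReal.toReal_ofReal hL0] at this
    _ ≤ 3 := by
        rw [mul_inv_le_iff₀ hc0]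
        linarith
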